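/- Let n ≥ 1 and let k be an index with 1 < k < n. Let S be the n×n real matrix equal to the identity matrix except in row k, where S_{k,k-1} = c ≥ 0, S_{k,k} = d > 0, S_{k,k+1} = e ≥ 0, and all other entries of row k are zero. Then S is totally nonnegative and invertible. -/
import Mathlib


/-- A real square matrix is *totally nonnegative* if every minor (the determinant of
any square submatrix obtained by selecting equally many rows and columns, preserving
their order) is nonnegative. -/
def TotallyNonneg {n : ℕ} (A : Matrix (Fin n) (Fin n) ℝ) : Prop :=
  ∀ (k : ℕ) (r c : Fin k → Fin n), StrictMono r → StrictMono c →
    0 ≤ (A.submatrix r c).det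

/-- A strictly monotone self-map of `Fin m` is the identity. -/
lemma strictMono_fin_id {m : ℕ} {σ : Fin m → Fin m} (hσ : StrictMono σ) : σ = id := by
  have hbij : Function.Bijective σ := Finite.injective_iff_bijective.mp hσ.injective
  have h : Set.range σ = Set.range (id : Fin m → Fin m) := by
    rw [Set.range_id, Set.range_eq_univ.mpr hbij.surjective]
  haveI : WellFoundedLT (Fin m) := inferInstance
  exact (hσ.range_inj strictMono_id).mp h

/-- The determinant of any submatrix of the identity with monotone row selection and
strictly monotone column selection is nonnegative. -/
lemma det_one_submatrix_nonneg {m n : ℕ} (r cc : Fin m → Fin n) (hr : Monotone r)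
    (hcc : StrictMono cc) :
    0 ≤ ((1 : Matrix (Fin n) (Fin n) ℝ).submatrix r cc).det := by
  by_cases hinj : Function.Injective r
  · have hrs : StrictMono r := hr.strictMono_of_injective hinj
    by_cases hsub : ∀ i, ∃ j, cc j = r i
    · choose σ hσ using hsub
      have hσs : StrictMono σ := by
        intro i j hij
        have h2 : cc (σ i) < cc (σ j) := by rw [hσ i, hσ j]; exact hrs hij
        exact hcc.lt_iff_lt.mp h2
      have hid : σ = id := strictMono_fin_id hσs
      have hone : (1 : Matrix (Fin n) (Fin n) ℝ).submatrix r cc = 1 := by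
        ext i j
        have hri : r i = cc i := by rw [← hσ i, hid]; rfl
        simp only [Matrix.submatrix_apply, Matrix.one_apply, hri]
        by_cases h : i = j
        · simp [h]
        · rw [if_neg h, if_neg (fun hcij => h (hcc.injective hcij))]
      rw [hone, Matrix.det_one]
      norm_num
    · push_neg at hsub
      obtain ⟨i, hi⟩ := hsub
      have : ((1 : Matrix (Fin n) (Fin n) ℝ).submatrix r cc).det = 0 :=
        Matrix.det_eq_zero_of_row_eq_zero i
          (fun j => Matrix.one_apply_ne (fun h => hi j h.symm))
      exact this.ge
  · rw [Function.not_injective_iff] at hinj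
    obtain ⟨i, j, heq, hne⟩ := hinj
    have : ((1 : Matrix (Fin n) (Fin n) ℝ).submatrix r cc).det = 0 :=
      Matrix.det_zero_of_row_eq hne
        (by funext j'; rw [Matrix.submatrix_apply, Matrix.submatrix_apply, heq])
    exact this.ge

/-- A single step of harmonic continuation: the matrix equal to the identity except in
row `k` (an interior index, zero-based: `0 < k` and `k + 1 < n`), where the entries in
columns `k-1`, `k`, `k+1` are `c ≥ 0`, `d > 0`, `e ≥ 0` and all other entries of row
`k` vanish.  Such a matrix is totally nonnegative and invertible. -/
theorem step_matrix_totallyNonneg_invertible {n : ℕ} (k : Fin n)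
    (hk0 : 0 < (k : ℕ)) (hkn : (k : ℕ) + 1 < n)
    (c d e : ℝ) (hc : 0 ≤ c) (hd : 0 < d) (he : 0 ≤ e)
    (S : Matrix (Fin n) (Fin n) ℝ)
    (hS : ∀ i j : Fin n, S i j =
      if i = k then
        (if (j : ℕ) + 1 = (k : ℕ) then c
         else if j = k then d
         else if (j : ℕ) = (k : ℕ) + 1 then e
         else 0)
      else (if i = j then 1 else 0)) :
    TotallyNonneg S ∧ IsUnit S := by
  set km1 : Fin n := ⟨(k : ℕ) - 1, by omega⟩ with hkm1
  set kp1 : Fin n := ⟨(k : ℕ) + 1, hkn⟩ with hkp1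
  have vm1 : (km1 : ℕ) = (k : ℕ) - 1 := rfl
  have vp1 : (kp1 : ℕ) = (k : ℕ) + 1 := rfl
  have hkm : ∀ x : Fin n, km1 = x ↔ (x : ℕ) + 1 = (k : ℕ) := by
    intro x; rw [Fin.ext_iff, vm1]; omega
  have hkp : ∀ x : Fin n, kp1 = x ↔ (x : ℕ) = (k : ℕ) + 1 := by
    intro x; rw [Fin.ext_iff, vp1]; omega
  have hm1k : km1 ≠ k := fun h => by have := (hkm k).mp h; omega
  have hp1k : kp1 ≠ k := fun h => by have := (hkp k).mp h; omega
  -- the key expansion lemma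
  have key : ∀ (m : ℕ) (r cc : Fin m → Fin n), StrictMono r → StrictMono cc →
      ∀ a : Fin m, r a = k →
      (S.submatrix r cc).det =
        c * ((1 : Matrix (Fin n) (Fin n) ℝ).submatrix (Function.update r a km1) cc).det
      + d * ((1 : Matrix (Fin n) (Fin n) ℝ).submatrix r cc).det
      + e * ((1 : Matrix (Fin n) (Fin n) ℝ).submatrix (Function.update r a kp1) cc).det := by
    intro m r cc hr hcc a ha
    set M := S.submatrix r cc with hM
    have hoff : ∀ i : Fin m, i ≠ a → ∀ j, M i j = if r i = cc j then (1:ℝ) else 0 := by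
      intro i hi j
      have hrk : r i ≠ k := fun h => hi (hr.injective (h.trans ha.symm))
      simp [hM, Matrix.submatrix_apply, hS, hrk]
    have hrow : M a = c • (fun j => if km1 = cc j then (1:ℝ) else 0)
        + d • (fun j => if k = cc j then (1:ℝ) else 0)
        + e • (fun j => if kp1 = cc j then (1:ℝ) else 0) := by
      funext j
      simp only [hM, Matrix.submatrix_apply, ha, hS, if_pos rfl, Pi.add_apply,
        Pi.smul_apply, smul_eq_mul]
      by_cases h1 : (cc j : ℕ) + 1 = (k : ℕ)
      · rw [if_pos h1, if_pos ((hkm _).mpr h1),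
          if_neg (show k ≠ cc j from fun h => by
            have := congrArg Fin.val h; omega),
          if_neg (show kp1 ≠ cc j from fun h => by have := (hkp _).mp h; omega)]
        simp
      · rw [if_neg h1, if_neg (fun h => h1 ((hkm _).mp h))]
        by_cases h2 : cc j = k
        · rw [if_pos h2, if_pos (show k = cc j from h2.symm),
            if_neg (show kp1 ≠ cc j from fun h => by
              have := (hkp _).mp h; have := congrArg Fin.val h2; omega)]
          simp
        · rw [if_neg h2, if_neg (show k ≠ cc j from fun h => h2 h.symm)]
          by_cases h3 : (cc j : ℕ) = (k : ℕ) + 1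
          · rw [if_pos h3, if_pos ((hkp _).mpr h3)]; simp
          · rw [if_neg h3, if_neg (fun h => h3 ((hkp _).mp h))]; simp
    have hupd : ∀ x : Fin n,
        M.updateRow a (fun j => if x = cc j then (1:ℝ) else 0)
          = (1 : Matrix (Fin n) (Fin n) ℝ).submatrix (Function.update r a x) cc := by
      intro x
      ext i j
      by_cases hi : i = a
      · subst hi
        simp [Matrix.updateRow_self, Matrix.submatrix_apply, Function.update_self,
          Matrix.one_apply]
      · rw [Matrix.updateRow_ne hi, hoff i hi j]
        simp [Matrix.submatrix_apply, Function.update_of_ne hi, Matrix.one_apply]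
    have hMid : (1 : Matrix (Fin n) (Fin n) ℝ).submatrix r cc
        = M.updateRow a (fun j => if k = cc j then (1:ℝ) else 0) := by
      rw [hupd k, ← ha, Function.update_eq_self]
    calc M.det = (M.updateRow a (M a)).det := by rw [Matrix.updateRow_eq_self]
      _ = _ := by
          rw [hrow]
          rw [Matrix.det_updateRow_add]
          rw [Matrix.det_updateRow_add]
          rw [Matrix.det_updateRow_smul]
          rw [Matrix.det_updateRow_smul]
          rw [Matrix.det_updateRow_smul]
          rw [hupd km1]
          rw [hupd kp1]
          rw [hMid]
  have mono_upd : ∀ (m : ℕ) (r : Fin m → Fin n), StrictMono r → ∀ a : Fin m, r a = k →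
      ∀ x : Fin n, ((x : ℕ) = (k:ℕ) - 1 ∨ (x : ℕ) = (k:ℕ) + 1) →
      Monotone (Function.update r a x) := by
    intro m r hr a ha x hx i j hij
    rcases eq_or_lt_of_le hij with h | h
    · subst h; exact le_refl _
    by_cases hi : i = a <;> by_cases hj : j = a
    · exact absurd (hi.trans hj.symm) h.ne
    · subst hi
      rw [Function.update_self, Function.update_of_ne hj]
      have hlt : (k : ℕ) < (r j : ℕ) := by
        have := hr h; rw [ha] at this; exact this
      rw [Fin.le_def]; omega
    · subst hj
      rw [Function.update_self, Function.update_of_ne hi]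
      have hlt : (r i : ℕ) < (k : ℕ) := by
        have := hr h; rw [ha] at this; exact this
      rw [Fin.le_def]; omega
    · rw [Function.update_of_ne hi, Function.update_of_ne hj]
      exact (hr h).le
  constructor
  · intro m r cc hr hcc
    by_cases hk : ∃ a, r a = k
    · obtain ⟨a, ha⟩ := hk
      rw [key m r cc hr hcc a ha]
      have h1 := mono_upd m r hr a ha km1 (Or.inl vm1)
      have h2 := mono_upd m r hr a ha kp1 (Or.inr vp1)
      have g1 := det_one_submatrix_nonneg _ cc h1 hcc
      have g2 := det_one_submatrix_nonneg r cc hr.monotone hcc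
      have g3 := det_one_submatrix_nonneg _ cc h2 hcc
      positivity
    · push_neg at hk
      have : S.submatrix r cc = (1 : Matrix (Fin n) (Fin n) ℝ).submatrix r cc := by
        ext i j
        simp [Matrix.submatrix_apply, hS, hk i, Matrix.one_apply]
      rw [this]
      exact det_one_submatrix_nonneg r cc hr.monotone hcc
  · have hid : S.submatrix (id : Fin n → Fin n) id = S := by ext i j; rfl
    have hdet := key n id id strictMono_id strictMono_id k rfl
    rw [hid] at hdet
    have h2 : ((1 : Matrix (Fin n) (Fin n) ℝ).submatrix (id : Fin n → Fin n) id).det = 1 := by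
      rw [Matrix.submatrix_id_id, Matrix.det_one]
    have h1 : ((1 : Matrix (Fin n) (Fin n) ℝ).submatrix
        (Function.update (id : Fin n → Fin n) k km1) id).det = 0 := by
      apply Matrix.det_zero_of_row_eq hm1k
      funext j
      rw [Matrix.submatrix_apply, Matrix.submatrix_apply, Function.update_self,
        Function.update_of_ne hm1k]
      rfl
    have h3 : ((1 : Matrix (Fin n) (Fin n) ℝ).submatrix
        (Function.update (id : Fin n → Fin n) k kp1) id).det = 0 := by
      apply Matrix.det_zero_of_row_eq hp1k
      funext j
      rw [Matrix.submatrix_apply, Matrix.submatrix_apply, Function.update_self,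
        Function.update_of_ne hp1k]
      rfl
    rw [h1, h2, h3] at hdet
    have hSd : S.det = d := by rw [hdet]; ring
    exact (Matrix.isUnit_iff_isUnit_det S).mpr
      (by rw [hSd]; exact isUnit_iff_ne_zero.mpr hd.ne')
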